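/- Let A be an n×m matrix with value v, columns c_i, such that c_1 = v·1_n, the equilibrium set X* = { x ∈ S_n : min_i (c_i)^T x = v } is disjoint from ∂S_n, and for every x in the relative interior of X* and every i ≥ 2 we have (c_i)^T x > v. Then for every x* on the relative boundary of X* (within the affine hull of S_n), there exists an index i ≥ 2 such that (c_i)^T x* > v. -/
import Mathlib


noncomputable def colPay {n m : ℕ} (A : Matrix (Fin n) (Fin m) ℝ) (i : Fin m)
    (x : Fin n → ℝ) : ℝ := ∑ j, A j i * x j

noncomputable def minPay {n m : ℕ} (A : Matrix (Fin n) (Fin (m + 1)) ℝ)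
    (x : Fin n → ℝ) : ℝ :=
  Finset.univ.inf' Finset.univ_nonempty fun i => colPay A i x

def simplexBoundary (n : ℕ) : Set (Fin n → ℝ) :=
  {x ∈ stdSimplex ℝ (Fin n) | ∃ j, x j = 0}

/-- Relative interior (within the simplex) of a subset `X` of the simplex. -/
def relInt {n : ℕ} (X : Set (Fin n → ℝ)) : Set (Fin n → ℝ) :=
  {x ∈ X | ∃ ε > (0 : ℝ), Metric.ball x ε ∩ stdSimplex ℝ (Fin n) ⊆ X}

theorem stmt12 {n m : ℕ} (A : Matrix (Fin (n + 1)) (Fin (m + 1)) ℝ) (v : ℝ)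
    -- v is the value of the game
    (hub : ∀ x ∈ stdSimplex ℝ (Fin (n + 1)), minPay A x ≤ v)
    (hach : ∃ x ∈ stdSimplex ℝ (Fin (n + 1)), minPay A x = v)
    -- the first column is v·1_n
    (hc1 : ∀ j, A j 0 = v)
    -- every equilibrium of Player 1 is fully mixed
    (hbd : {x ∈ stdSimplex ℝ (Fin (n + 1)) | minPay A x = v} ∩ simplexBoundary (n + 1) = ∅)
    -- X* has nonempty relative interior
    (hne : (relInt {x ∈ stdSimplex ℝ (Fin (n + 1)) | minPay A x = v}).Nonempty)
    -- on the relative interior of X*, every non-constant column pays strictly more than v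
    (hint : ∀ x ∈ relInt {x ∈ stdSimplex ℝ (Fin (n + 1)) | minPay A x = v},
      ∀ i : Fin (m + 1), i ≠ 0 → v < colPay A i x) :
    ∀ xstar ∈ {x ∈ stdSimplex ℝ (Fin (n + 1)) | minPay A x = v},
      xstar ∉ relInt {x ∈ stdSimplex ℝ (Fin (n + 1)) | minPay A x = v} →
        ∃ i : Fin (m + 1), i ≠ 0 ∧ v < colPay A i xstar := by
  intro xs hxs hnint
  by_contra hcon
  push_neg at hcon
  obtain ⟨hxs1, hxs2⟩ := hxs
  -- col 0 pays exactly v on the simplex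
  have hcol0 : ∀ x ∈ stdSimplex ℝ (Fin (n + 1)), colPay A 0 x = v := by
    intro x hx
    have : colPay A 0 x = v * ∑ j, x j := by
      simp only [colPay, hc1, ← Finset.mul_sum]
    rw [this, hx.2, mul_one]
  -- all columns are tight at xs
  have hge : ∀ i, v ≤ colPay A i xs := by
    intro i
    rw [← hxs2]
    exact Finset.inf'_le _ (Finset.mem_univ i)
  have htight : ∀ i, colPay A i xs = v := by
    intro i
    by_cases hi : i = 0
    · subst hi; exact hcol0 xs hxs1
    · exact le_antisymm (hcon i hi) (hge i)
  obtain ⟨x', hx'⟩ := hne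
  have hx'X : x' ∈ {x ∈ stdSimplex ℝ (Fin (n + 1)) | minPay A x = v} := hx'.1
  have hxne : xs ≠ x' := fun h => hnint (h ▸ hx')
  set w : Fin (n + 1) → ℝ := fun j => x' j - xs j with hw
  have hsumw : ∑ j, w j = 0 := by
    simp only [hw, Finset.sum_sub_distrib, hx'X.1.2, hxs1.2, sub_self]
  -- some coordinate of w is negative
  have hwne : ∃ j, w j < 0 := by
    by_contra h
    push_neg at h
    have h0 : ∀ j ∈ Finset.univ, w j = 0 :=
      (Finset.sum_eq_zero_iff_of_nonneg (fun j _ => h j)).1 hsumw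
    apply hxne
    funext j
    have := h0 j (Finset.mem_univ j)
    simp only [hw] at this
    linarith
  set T := Finset.univ.filter (fun j => w j < 0) with hTdef
  have hT : T.Nonempty := by
    obtain ⟨j, hj⟩ := hwne
    exact ⟨j, by simp [hTdef, hj]⟩
  set g : Fin (n + 1) → ℝ := fun j => xs j / (-(w j)) with hg
  set lam := T.inf' hT g with hlamdef
  obtain ⟨j0, hj0T, hj0⟩ := Finset.exists_mem_eq_inf' hT g
  have hwj0 : w j0 < 0 := (Finset.mem_filter.1 hj0T).2
  have hlam0 : 0 ≤ lam := by
    rw [hlamdef, hj0, hg]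
    exact div_nonneg (hxs1.1 j0) (by linarith)
  set y : Fin (n + 1) → ℝ := fun j => xs j + lam * w j with hy
  -- y is in the simplex
  have hymem : y ∈ stdSimplex ℝ (Fin (n + 1)) := by
    constructor
    · intro j
      by_cases hjw : w j < 0
      · have hjT : j ∈ T := by simp [hTdef, hjw]
        have hle : lam ≤ g j := Finset.inf'_le _ hjT
        rw [hg] at hle
        have := (le_div_iff₀ (by linarith : (0:ℝ) < -(w j))).1 hle
        simp only [hy]
        nlinarith
      · push_neg at hjw
        have := hxs1.1 j
        have := mul_nonneg hlam0 hjw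
        simp only [hy]
        linarith
    · simp only [hy, Finset.sum_add_distrib, ← Finset.mul_sum, hsumw, hxs1.2, mul_zero, add_zero]
  -- y has a zero coordinate
  have hyj0 : y j0 = 0 := by
    have hlamj0 : lam = xs j0 / (-(w j0)) := by rw [hlamdef, hj0]
    have hne0 : w j0 ≠ 0 := ne_of_lt hwj0
    simp only [hy, hlamj0]
    rw [div_neg, neg_mul, div_mul_cancel₀ _ hne0, add_neg_cancel]
  -- linearity of colPay along the ray
  have hlin : ∀ i, colPay A i y = colPay A i xs + lam * (colPay A i x' - colPay A i xs) := by
    intro i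
    simp only [colPay, hy, hw, Finset.mul_sum, ← Finset.sum_sub_distrib, ← Finset.sum_add_distrib]
    exact Finset.sum_congr rfl fun j _ => by ring
  -- all columns pay ≥ v at y
  have hygec : ∀ i, v ≤ colPay A i y := by
    intro i
    have h1 : v ≤ colPay A i x' := by
      rw [← hx'X.2]
      exact Finset.inf'_le _ (Finset.mem_univ i)
    have h2 := htight i
    have h3 := mul_nonneg hlam0 (by linarith : (0:ℝ) ≤ colPay A i x' - colPay A i xs)
    rw [h2] at h3
    rw [hlin i, h2]
    linarith
  have hymin : minPay A y = v := by
    refine le_antisymm (hub y hymem) ?_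
    exact Finset.le_inf' _ _ fun i _ => hygec i
  have : y ∈ ({x ∈ stdSimplex ℝ (Fin (n + 1)) | minPay A x = v} ∩ simplexBoundary (n + 1)) :=
    ⟨⟨hymem, hymin⟩, hymem, j0, hyj0⟩
  rw [hbd] at this
  exact this
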